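/- Let θ_1, θ_2, θ_3 : ℝ → ℝ be a solution of the identical Kuramoto model for N = 3 and let Δ_1 = θ_1 − θ_2, Δ_2 = θ_2 − θ_3, Δ_3 = θ_3 − θ_1. Then the observable u_1(t) = sin(Δ_1(t)/2) satisfies, for all t, u_1'(t) = Λ_1(t)·u_1(t), where Λ_1(t) = −(K/6)·(2 + 2·cos Δ_1(t) + cos Δ_2(t) + cos Δ_3(t)). -/

import Mathlib

/-- For the identical Kuramoto model with `N = 3`, the observable
`u₁ = sin(Δ₁/2)` (where `Δ₁ = θ₁ − θ₂`) satisfies `u₁' = Λ₁·u₁` with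
`Λ₁ = −(K/6)·(2 + 2 cos Δ₁ + cos Δ₂ + cos Δ₃)`. -/
theorem growth_rate_u1_kuramoto3
    (ω K : ℝ) (θ1 θ2 θ3 : ℝ → ℝ)
    (h1 : ∀ t : ℝ, HasDerivAt θ1
      (ω + K / 3 * (Real.sin (θ1 t - θ1 t) + Real.sin (θ2 t - θ1 t) + Real.sin (θ3 t - θ1 t))) t)
    (h2 : ∀ t : ℝ, HasDerivAt θ2
      (ω + K / 3 * (Real.sin (θ1 t - θ2 t) + Real.sin (θ2 t - θ2 t) + Real.sin (θ3 t - θ2 t))) t)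
    (h3 : ∀ t : ℝ, HasDerivAt θ3
      (ω + K / 3 * (Real.sin (θ1 t - θ3 t) + Real.sin (θ2 t - θ3 t) + Real.sin (θ3 t - θ3 t))) t)
    (Δ1 Δ2 Δ3 : ℝ → ℝ)
    (hΔ1 : ∀ t, Δ1 t = θ1 t - θ2 t)
    (hΔ2 : ∀ t, Δ2 t = θ2 t - θ3 t)
    (hΔ3 : ∀ t, Δ3 t = θ3 t - θ1 t) :
    ∀ t : ℝ,
      HasDerivAt (fun s => Real.sin (Δ1 s / 2))
        (-(K / 6) * (2 + 2 * Real.cos (Δ1 t) + Real.cos (Δ2 t) + Real.cos (Δ3 t))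
          * Real.sin (Δ1 t / 2)) t := by
  have hΔ1' : Δ1 = fun s => θ1 s - θ2 s := funext hΔ1
  have hΔ2' : Δ2 = fun s => θ2 s - θ3 s := funext hΔ2
  have hΔ3' : Δ3 = fun s => θ3 s - θ1 s := funext hΔ3
  subst hΔ1' hΔ2' hΔ3'
  intro t
  have H := (((h1 t).sub (h2 t)).div_const 2).sin
  simp only [Pi.sub_apply] at H
  convert H using 1
  set a := θ1 t
  set b := θ2 t
  set c := θ3 t
  have e0 : a - a = 0 := by ring
  have e0' : b - b = 0 := by ring
  have eba : b - a = -((a - b) / 2 + (a - b) / 2) := by ring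
  have eab : a - b = (a - b) / 2 + (a - b) / 2 := by ring
  have ebc : b - c = -((c - a) + ((a - b) / 2 + (a - b) / 2)) := by ring
  have ecb : c - b = (c - a) + ((a - b) / 2 + (a - b) / 2) := by ring
  beta_reduce
  rw [e0, e0', eba, ebc, ecb]
  rw [show Real.cos (a - b) = Real.cos ((a - b) / 2 + (a - b) / 2) from by rw [← eab],
    show Real.sin (a - b) = Real.sin ((a - b) / 2 + (a - b) / 2) from by rw [← eab]]
  set p := (a - b) / 2
  set q := c - a
  simp only [Real.sin_add, Real.cos_add, Real.sin_neg, Real.cos_neg, Real.sin_zero]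
  have hp := Real.sin_sq_add_cos_sq p
  linear_combination ((2*K/3)*Real.sin p + (K/3)*Real.cos q*Real.sin p
    + (K/6)*(Real.cos p*Real.sin q - 2*Real.sin p - Real.sin p*Real.cos q)) * hp
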